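/- For polynomials ψ of degree at most N and real numbers 0 ≤ r ≤ s, there is a constant C independent of N such that ‖ψ‖_{s,w} ≤ C·N^{2(s−r)}·‖ψ‖_{r,w} (inverse inequality in weighted Sobolev norms). -/

import Mathlib

/-- The weighted Sobolev norm `‖f‖_{k,w}` (integer order `k`) for the Jacobi weight
`w(x) = (1−x²)^μ`: `‖f‖_{k,w}² = Σ_{j≤k} ∫ (f^{(j)})² w`. -/
noncomputable def wSobNorm (μ : ℝ) (k : ℕ) (f : ℝ → ℝ) : ℝ :=
  Real.sqrt (∑ j ∈ Finset.range (k + 1),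
    ∫ s in (-1:ℝ)..1, (iteratedDeriv j f s) ^ 2 * (1 - s ^ 2) ^ μ)

open MeasureTheory Set Polynomial intervalIntegral Filter

noncomputable def wt (a x : ℝ) : ℝ := (1 - x^2) ^ a

lemma wt_meas (a : ℝ) : Measurable (wt a) := by
  unfold wt
  fun_prop

lemma wt_nonneg (a : ℝ) {x : ℝ} (hx : x ∈ Icc (-1:ℝ) 1) : 0 ≤ wt a x := by
  apply Real.rpow_nonneg
  nlinarith [hx.1, hx.2]

lemma wt_pos (a : ℝ) {x : ℝ} (hx : x ∈ Ioo (-1:ℝ) 1) : 0 < wt a x := by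
  apply Real.rpow_pos_of_pos
  nlinarith [hx.1, hx.2]

lemma poly_bound (p : Polynomial ℝ) : ∃ M : ℝ, ∀ x ∈ Icc (-1:ℝ) 1, |p.eval x| ≤ M := by
  obtain ⟨M, hM⟩ := isCompact_Icc.exists_bound_of_continuousOn
    (f := fun x => p.eval x) (p.continuous_aeval.continuousOn)
  exact ⟨M, fun x hx => by simpa using hM x hx⟩

lemma integrableW (a : ℝ) (ha : -1 < a) (p : Polynomial ℝ) :
    IntervalIntegrable (fun x => p.eval x * wt a x) volume (-1) 1 := by
  obtain ⟨M, hM⟩ := poly_bound p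
  have hM0 : 0 ≤ M := le_trans (abs_nonneg _) (hM 0 (by norm_num))
  have key : ∀ c : ℝ, (IntervalIntegrable (fun x => (c - x^2)⁻¹ * 0) volume 0 0) := by
    intro c; simp
  -- piece on [0,1]
  have h1 : IntervalIntegrable (fun x => p.eval x * wt a x) volume 0 1 := by
    have hg : IntervalIntegrable (fun x => (1 - x) ^ a) volume 0 1 := by
      have h0 : IntervalIntegrable (fun x : ℝ => x ^ a) volume 0 1 :=
        intervalIntegrable_rpow' ha
      simpa using (h0.comp_sub_left 1).symm
    rw [intervalIntegrable_iff_integrableOn_Ioo_of_le (by norm_num)] at hg ⊢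
    apply Integrable.mono' (g := fun x => (M * max 1 (2^a)) * (1 - x) ^ a)
      (hg.const_mul _)
      (((p.continuous_aeval.measurable.mul (wt_meas a))).aestronglyMeasurable)
    rw [ae_restrict_iff' measurableSet_Ioo]
    filter_upwards with x hx
    have h1x : (0:ℝ) < 1 - x := by linarith [hx.2]
    have h2x : (0:ℝ) < 1 + x := by linarith [hx.1]
    have hw : wt a x = (1-x)^a * (1+x)^a := by
      unfold wt
      rw [← Real.mul_rpow h1x.le h2x.le]; ring_nf
    have hb : (1+x)^a ≤ max 1 (2^a) := by
      rcases le_or_gt 0 a with h | h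
      · exact le_trans (Real.rpow_le_rpow h2x.le (by linarith [hx.2]) h) (le_max_right _ _)
      · exact le_trans (Real.rpow_le_one_of_one_le_of_nonpos (by linarith [hx.1]) h.le)
          (le_max_left _ _)
    have hwn : (0:ℝ) ≤ (1-x)^a := Real.rpow_nonneg h1x.le _
    have hwn2 : (0:ℝ) ≤ (1+x)^a := Real.rpow_nonneg h2x.le _
    have hpe : |p.eval x| ≤ M := hM x (Ioo_subset_Icc_self (Ioo_subset_Ioo (by norm_num) le_rfl hx))
    show ‖p.eval x * wt a x‖ ≤ _
    rw [norm_mul, hw, Real.norm_eq_abs, Real.norm_eq_abs, abs_of_nonneg (mul_nonneg hwn hwn2)]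
    calc |p.eval x| * ((1-x)^a * (1+x)^a) ≤ M * ((1-x)^a * max 1 (2^a)) :=
          mul_le_mul hpe (mul_le_mul_of_nonneg_left hb hwn) (mul_nonneg hwn hwn2) hM0
      _ = M * max 1 (2^a) * (1 - x)^a := by ring
  -- piece on [-1,0]
  have h2 : IntervalIntegrable (fun x => p.eval x * wt a x) volume (-1) 0 := by
    have hg : IntervalIntegrable (fun x => (1 + x) ^ a) volume (-1) 0 := by
      have h0 : IntervalIntegrable (fun x : ℝ => x ^ a) volume 0 1 :=
        intervalIntegrable_rpow' ha
      have := h0.comp_add_right 1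
      norm_num at this
      simpa [add_comm] using this
    rw [intervalIntegrable_iff_integrableOn_Ioo_of_le (by norm_num)] at hg ⊢
    apply Integrable.mono' (g := fun x => (M * max 1 (2^a)) * (1 + x) ^ a)
      (hg.const_mul _)
      (((p.continuous_aeval.measurable.mul (wt_meas a))).aestronglyMeasurable)
    rw [ae_restrict_iff' measurableSet_Ioo]
    filter_upwards with x hx
    have h1x : (0:ℝ) < 1 - x := by linarith [hx.2]
    have h2x : (0:ℝ) < 1 + x := by linarith [hx.1]
    have hw : wt a x = (1-x)^a * (1+x)^a := by
      unfold wt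
      rw [← Real.mul_rpow h1x.le h2x.le]; ring_nf
    have hb : (1-x)^a ≤ max 1 (2^a) := by
      rcases le_or_gt 0 a with h | h
      · exact le_trans (Real.rpow_le_rpow h1x.le (by linarith [hx.1]) h) (le_max_right _ _)
      · exact le_trans (Real.rpow_le_one_of_one_le_of_nonpos (by linarith [hx.2]) h.le)
          (le_max_left _ _)
    have hwn : (0:ℝ) ≤ (1+x)^a := Real.rpow_nonneg h2x.le _
    have hwn1 : (0:ℝ) ≤ (1-x)^a := Real.rpow_nonneg h1x.le _
    have hpe : |p.eval x| ≤ M := hM x (Ioo_subset_Icc_self (Ioo_subset_Ioo le_rfl (by norm_num) hx))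
    show ‖p.eval x * wt a x‖ ≤ _
    rw [norm_mul, hw, Real.norm_eq_abs, Real.norm_eq_abs, abs_of_nonneg (mul_nonneg hwn1 hwn)]
    calc |p.eval x| * ((1-x)^a * (1+x)^a) ≤ M * (max 1 (2^a) * (1+x)^a) :=
          mul_le_mul hpe (mul_le_mul_of_nonneg_right hb hwn) (mul_nonneg hwn1 hwn) hM0
      _ = M * max 1 (2^a) * (1 + x)^a := by ring
  exact h2.trans h1
-- Part 2: J, ip, bilinearity, positivity, CS
noncomputable def J (a : ℝ) (u : Polynomial ℝ) : ℝ :=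
  ∫ x in (-1:ℝ)..1, u.eval x * wt a x

lemma J_add {a : ℝ} (ha : -1 < a) (u v : Polynomial ℝ) :
    J a (u + v) = J a u + J a v := by
  unfold J
  rw [← intervalIntegral.integral_add (integrableW a ha u) (integrableW a ha v)]
  apply intervalIntegral.integral_congr
  intro x _
  simp [add_mul]

lemma J_Cmul {a : ℝ} (c : ℝ) (u : Polynomial ℝ) :
    J a (Polynomial.C c * u) = c * J a u := by
  unfold J
  rw [← intervalIntegral.integral_const_mul]
  apply intervalIntegral.integral_congr
  intro x _
  simp [mul_assoc]

lemma J_nonneg {a : ℝ} (u : Polynomial ℝ) : 0 ≤ J a (u * u) := by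
  apply intervalIntegral.integral_nonneg (by norm_num)
  intro x hx
  have := wt_nonneg a hx
  simp only [Polynomial.eval_mul]
  nlinarith [sq_nonneg (u.eval x)]

lemma integral_congr_Ioo {f g : ℝ → ℝ} (h : ∀ x ∈ Set.Ioo (-1:ℝ) 1, f x = g x) :
    ∫ x in (-1:ℝ)..1, f x = ∫ x in (-1:ℝ)..1, g x := by
  apply intervalIntegral.integral_congr_ae
  rw [MeasureTheory.ae_iff]
  apply measure_mono_null (t := {(1:ℝ)})
  · intro x hx
    simp only [Set.mem_setOf_eq, Classical.not_imp] at hx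
    obtain ⟨hx1, hx2⟩ := hx
    rw [Set.uIoc_of_le (by norm_num)] at hx1
    by_contra hne
    exact hx2 (h x ⟨hx1.1, lt_of_le_of_ne hx1.2 (by simpa using hne)⟩)
  · exact measure_singleton 1

/-- shift the weight exponent by one -/
lemma J_shift (a : ℝ) (v : Polynomial ℝ) :
    J a ((1 - Polynomial.X^2) * v) = J (a+1) v := by
  unfold J
  apply integral_congr_Ioo
  intro x hx
  have h1 : (0:ℝ) < 1 - x^2 := by nlinarith [hx.1, hx.2]
  simp only [Polynomial.eval_mul, Polynomial.eval_sub, Polynomial.eval_pow,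
    Polynomial.eval_one, Polynomial.eval_X, wt]
  rw [Real.rpow_add_one h1.ne']
  ring

lemma J_pos {a : ℝ} (ha : -1 < a) {u : Polynomial ℝ} (hu : u ≠ 0) : 0 < J a (u * u) := by
  -- find a point where u doesn't vanish
  have hfin : Set.Finite {x : ℝ | u.IsRoot x} := Polynomial.finite_setOf_isRoot hu
  have hinf : (Set.Ioo (-1:ℝ) 1).Infinite := Set.Ioo_infinite (by norm_num)
  obtain ⟨t, ht⟩ := (hinf.diff hfin).nonempty
  obtain ⟨ht1, ht2⟩ := ht
  set f : ℝ → ℝ := fun x => (u*u).eval x * wt a x with hf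
  have hcont : ContinuousAt f t := by
    apply ContinuousAt.mul
    · exact (Polynomial.continuous_aeval (u*u)).continuousAt
    · apply ContinuousAt.rpow_const
      · exact (continuous_const.sub (continuous_pow 2)).continuousAt
      · left
        have : (0:ℝ) < 1 - t^2 := by nlinarith [ht1.1, ht1.2]
        exact this.ne'
  have hft : 0 < f t := by
    have hw := wt_pos a ht1
    have hune : u.eval t ≠ 0 := by simpa [Polynomial.IsRoot] using ht2
    have h2 : 0 < u.eval t * u.eval t := mul_self_pos.2 hune
    simp only [hf, Polynomial.eval_mul]
    exact mul_pos h2 hw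
  have hev : ∀ᶠ x in nhds t, 0 < f x := hcont.eventually (eventually_gt_nhds hft)
  have hmem : {x : ℝ | 0 < f x} ∩ Set.Ioo (-1) 1 ∈ nhds t :=
    Filter.inter_mem hev (isOpen_Ioo.mem_nhds ht1)
  obtain ⟨c, d, htcd, hsub⟩ := mem_nhds_iff_exists_Ioo_subset.1 hmem
  set c' := max c (-1 : ℝ) with hc'
  set d' := min d (1 : ℝ) with hd'
  have htc' : t ∈ Set.Ioo c' d' := by
    constructor
    · exact max_lt htcd.1 ht1.1
    · exact lt_min htcd.2 ht1.2
  have hsub' : Set.Ioo c' d' ⊆ {x : ℝ | 0 < f x} ∩ Set.Ioo (-1) 1 := by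
    intro x hx
    exact hsub ⟨lt_of_le_of_lt (le_max_left _ _) hx.1, lt_of_lt_of_le hx.2 (min_le_left _ _)⟩
  have hc'm : (-1:ℝ) ≤ c' := le_max_right _ _
  have hd'm : d' ≤ (1:ℝ) := min_le_right _ _
  have hcd' : c' < d' := htc'.1.trans htc'.2
  have hfi : IntervalIntegrable f MeasureTheory.volume (-1) 1 := integrableW a ha (u*u)
  have hfi' : IntervalIntegrable f MeasureTheory.volume c' d' := by
    apply hfi.mono_set
    rw [Set.uIcc_of_le hcd'.le, Set.uIcc_of_le (by norm_num : (-1:ℝ) ≤ 1)]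
    exact Set.Icc_subset_Icc hc'm hd'm
  have hpos : 0 < ∫ x in c'..d', f x :=
    intervalIntegral.intervalIntegral_pos_of_pos_on hfi'
      (fun x hx => (hsub' hx).1) hcd'
  have hmono : (∫ x in c'..d', f x) ≤ ∫ x in (-1:ℝ)..1, f x := by
    apply intervalIntegral.integral_mono_interval hc'm hcd'.le hd'm ?_ hfi
    filter_upwards [MeasureTheory.ae_restrict_mem measurableSet_Ioc] with x hx
    have hxI : x ∈ Set.Icc (-1:ℝ) 1 := ⟨hx.1.le, hx.2⟩
    have h0 := wt_nonneg a hxI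
    show (0:ℝ) ≤ f x
    simp only [hf, Polynomial.eval_mul]
    nlinarith [mul_self_nonneg (u.eval x)]
  exact lt_of_lt_of_le hpos hmono
-- Part 3: Cauchy-Schwarz, integration by parts, the operator A
noncomputable def ip (a : ℝ) (p q : Polynomial ℝ) : ℝ := J a (p * q)

lemma J_sub {a : ℝ} (ha : -1 < a) (u v : Polynomial ℝ) :
    J a (u - v) = J a u - J a v := by
  have h1 : u - v = u + Polynomial.C (-1) * v := by
    rw [map_neg, map_one]; ring
  rw [h1, J_add ha, J_Cmul]; ring

lemma ip_CS {a : ℝ} (ha : -1 < a) (p q : Polynomial ℝ) :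
    (J a (p*q))^2 ≤ J a (p*p) * J a (q*q) := by
  have key : ∀ t : ℝ, 0 ≤ (J a (q*q)) * (t*t) + (2 * J a (p*q)) * t + J a (p*p) := by
    intro t
    have h0 : 0 ≤ J a ((p + Polynomial.C t * q) * (p + Polynomial.C t * q)) := J_nonneg _
    have hexp : (p + Polynomial.C t * q) * (p + Polynomial.C t * q)
        = (p*p) + ((Polynomial.C t * (p*q) + Polynomial.C t * (p*q))
            + Polynomial.C (t*t) * (q*q)) := by
      rw [map_mul]; ring
    rw [hexp, J_add ha, J_add ha, J_add ha, J_Cmul, J_Cmul] at h0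
    linarith
  have hd := discrim_le_zero key
  rw [discrim] at hd
  nlinarith
lemma J_ibp {b : ℝ} (hb : 0 < b) (u : Polynomial ℝ) :
    J (b-1) ((1 - Polynomial.X^2) * u.derivative - Polynomial.C (2*b) * (Polynomial.X * u)) = 0 := by
  set P : Polynomial ℝ :=
    (1 - Polynomial.X^2) * u.derivative - Polynomial.C (2*b) * (Polynomial.X * u) with hP
  set f' : ℝ → ℝ := fun x => P.eval x * wt (b-1) x with hf'
  set F : ℝ → ℝ := fun x => u.eval x * wt b x with hF
  have hderiv : ∀ x ∈ Set.Ioo (-1:ℝ) 1, HasDerivAt F (f' x) x := by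
    intro x hx
    have h1 : (0:ℝ) < 1 - x^2 := by nlinarith [hx.1, hx.2]
    have hd1 : HasDerivAt (fun y : ℝ => 1 - y^2) (-(2*x)) x := by
      simpa using ((hasDerivAt_pow 2 x).const_sub 1)
    have hd2 : HasDerivAt (fun y : ℝ => (1 - y^2) ^ b) (-(2*x) * b * (1-x^2)^(b-1)) x :=
      hd1.rpow_const (Or.inl h1.ne')
    have hd3 : HasDerivAt (fun y => u.eval y) (u.derivative.eval x) x := u.hasDerivAt x
    have hmul : HasDerivAt (fun y => u.eval y * (1 - y^2)^b) _ x := hd3.mul hd2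
    convert hmul using 1
    · rw [hF]; rfl
    have hsplit : (1-x^2)^b = (1-x^2)^(b-1) * (1-x^2) := by
      rw [← Real.rpow_add_one h1.ne' (b-1)]; ring_nf
    simp only [hf', hP, wt, Polynomial.eval_sub, Polynomial.eval_mul, Polynomial.eval_one,
      Polynomial.eval_pow, Polynomial.eval_X, Polynomial.eval_C]
    rw [hsplit]; ring
  have hint : IntervalIntegrable f' MeasureTheory.volume (-1) 1 :=
    integrableW (b-1) (by linarith) P
  have hcw : Continuous (fun x : ℝ => 1 - x^2) := by continuity
  have hr : ContinuousAt (fun t : ℝ => t ^ b) 0 :=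
    Real.continuousAt_rpow_const 0 b (Or.inr hb.le)
  have hz : (fun t : ℝ => t ^ b) 0 = 0 := Real.zero_rpow hb.ne'
  have htb : ∀ c : ℝ, c^2 = 1 → Filter.Tendsto F (nhds c) (nhds 0) := by
    intro c hc
    have h2 : Filter.Tendsto (fun x : ℝ => (1 - x^2) ^ b) (nhds c) (nhds 0) := by
      have hcc : (1:ℝ) - c^2 = 0 := by rw [hc]; ring
      have hc0 : Filter.Tendsto (fun x : ℝ => 1 - x^2) (nhds c) (nhds 0) := by
        have h' := hcw.tendsto c
        rwa [hcc] at h'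
      have := hr.tendsto.comp hc0
      rw [Function.comp_def] at this
      simpa [hz] using this
    have h3 := ((u.continuous_aeval.tendsto c).mul h2)
    simpa [hF, wt] using h3
  have key := intervalIntegral.integral_eq_sub_of_hasDerivAt_of_tendsto
    (by norm_num : (-1:ℝ) < 1) hderiv hint
    ((htb (-1) (by norm_num)).mono_left nhdsWithin_le_nhds)
    ((htb 1 (by norm_num)).mono_left nhdsWithin_le_nhds)
  simpa [J, hf'] using key

noncomputable def Apoly (a : ℝ) (p : Polynomial ℝ) : Polynomial ℝ :=
  Polynomial.C (2*(a+1)) * (Polynomial.X * p.derivative)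
    - (1 - Polynomial.X^2) * p.derivative.derivative

/-- integration by parts for the Jacobi operator -/
lemma J_Apoly {a : ℝ} (ha : -1 < a) (p q : Polynomial ℝ) :
    J a (Apoly a p * q) = J (a+1) (p.derivative * q.derivative) := by
  have h0 := J_ibp (b := a+1) (by linarith) (p.derivative * q)
  have hb1 : a + 1 - 1 = a := by ring
  rw [hb1] at h0
  have hpoly : (1 - Polynomial.X^2) * (p.derivative * q).derivative
      - Polynomial.C (2*(a+1)) * (Polynomial.X * (p.derivative * q))
      = (1 - Polynomial.X^2) * (p.derivative * q.derivative) - Apoly a p * q := by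
    rw [Polynomial.derivative_mul]; unfold Apoly; ring
  rw [hpoly, J_sub ha, J_shift] at h0
  linarith
-- Part 4: coefficients of Apoly and the spectral bound
lemma Apoly_coeff (a : ℝ) (v : Polynomial ℝ) (m : ℕ) :
    (Apoly a v).coeff m = (2*(a+1)*(m:ℝ) + (m:ℝ)*((m:ℝ)-1)) * v.coeff m
      - ((m:ℝ)+1)*((m:ℝ)+2) * v.coeff (m+2) := by
  have hX : (Polynomial.X * v.derivative).coeff m = (m:ℝ) * v.coeff m := by
    cases m with
    | zero => simp
    | succ n =>
      rw [Polynomial.coeff_X_mul, Polynomial.coeff_derivative]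
      push_cast; ring
  have hdd : (v.derivative.derivative).coeff m = ((m:ℝ)+1)*((m:ℝ)+2) * v.coeff (m+2) := by
    rw [Polynomial.coeff_derivative, Polynomial.coeff_derivative]
    push_cast; ring
  have hX2 : (Polynomial.X^2 * v.derivative.derivative).coeff m
      = (m:ℝ)*((m:ℝ)-1) * v.coeff m := by
    rw [mul_comm, Polynomial.coeff_mul_X_pow']
    rcases lt_or_ge m 2 with h | h
    · rw [if_neg (by omega)]
      interval_cases m <;> norm_num
    · rw [if_pos h]
      obtain ⟨k, rfl⟩ : ∃ k, m = k + 2 := ⟨m - 2, by omega⟩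
      simp only [Nat.add_sub_cancel]
      rw [Polynomial.coeff_derivative, Polynomial.coeff_derivative]
      push_cast; ring
  have hsplit : (1 - Polynomial.X^2) * v.derivative.derivative
      = v.derivative.derivative - Polynomial.X^2 * v.derivative.derivative := by ring
  unfold Apoly
  rw [Polynomial.coeff_sub, Polynomial.coeff_C_mul, hsplit, Polynomial.coeff_sub,
    hX, hdd, hX2]
  push_cast; ring

lemma Apoly_natDegree_le (a : ℝ) (v : Polynomial ℝ) :
    (Apoly a v).natDegree ≤ v.natDegree := by
  rw [Polynomial.natDegree_le_iff_coeff_eq_zero]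
  intro m hm
  rw [Apoly_coeff, Polynomial.coeff_eq_zero_of_natDegree_lt hm,
    Polynomial.coeff_eq_zero_of_natDegree_lt (by omega)]
  ring

lemma eig_id {a : ℝ} {v : Polynomial ℝ} (hv : v ≠ 0) {θ : ℝ} (h : Apoly a v = θ • v) :
    θ = (v.natDegree : ℝ) * ((v.natDegree : ℝ) + 2*a + 1) := by
  set n := v.natDegree with hn
  have hc : (Apoly a v).coeff n = θ * v.coeff n := by
    rw [h, Polynomial.coeff_smul, smul_eq_mul]
  have hz : v.coeff (n+2) = 0 := Polynomial.coeff_eq_zero_of_natDegree_lt (by omega)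
  rw [Apoly_coeff, hz, mul_zero, sub_zero] at hc
  have hl : v.coeff n ≠ 0 := by
    rw [hn]
    exact Polynomial.leadingCoeff_ne_zero.mpr hv
  have h2 : (2*(a+1)*(n:ℝ) + (n:ℝ)*((n:ℝ)-1)) = θ := mul_right_cancel₀ hl hc
  rw [← h2]; ring

lemma spec {a : ℝ} (ha : -1 < a) (N : ℕ) (p : Polynomial ℝ) (hp : p.natDegree ≤ N) :
    J (a+1) (p.derivative * p.derivative) ≤ (N:ℝ) * ((N:ℝ) + 2*a + 1) * J a (p * p) := by
  classical
  set V := Polynomial.degreeLT ℝ (N+1) with hV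
  have hmemV : ∀ q : Polynomial ℝ, q.natDegree ≤ N → q ∈ V := by
    intro q hq
    rw [hV, Polynomial.mem_degreeLT]
    have h1 : q.degree ≤ (N : WithBot ℕ) :=
      Polynomial.degree_le_natDegree.trans (by exact_mod_cast hq)
    exact lt_of_le_of_lt h1 (by exact_mod_cast Nat.lt_succ_self N)
  have hdeg : ∀ q : Polynomial ℝ, q ∈ V → q.natDegree ≤ N := by
    intro q hq
    rcases eq_or_ne q 0 with rfl | h
    · simp
    · rw [hV, Polynomial.mem_degreeLT] at hq
      have := (Polynomial.natDegree_lt_iff_degree_lt h).2 (by exact_mod_cast hq)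
      omega
  letI cV : InnerProductSpace.Core ℝ V :=
    { inner := fun u v => J a (u.1 * v.1)
      conj_inner_symm := fun u v => by
        simp only [conj_trivial]
        exact congrArg (J a) (mul_comm v.1 u.1)
      re_inner_nonneg := fun u => by exact J_nonneg (u := u.1)
      definite := fun u hu => by
        by_contra h
        have hne : (u : Polynomial ℝ) ≠ 0 := fun h0 => h (Subtype.ext h0)
        exact (J_pos ha hne).ne' hu
      add_left := fun u v w => by
        have h1 : ((u.1 : Polynomial ℝ) + v.1) * w.1 = u.1*w.1 + v.1*w.1 := by ring
        show J a ((u.1 + v.1) * w.1) = J a (u.1 * w.1) + J a (v.1 * w.1)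
        rw [h1, J_add ha]
      smul_left := fun u v r => by
        simp only [conj_trivial]
        show J a ((r • u.1) * v.1) = r * J a (u.1 * v.1)
        rw [Polynomial.smul_eq_C_mul, ← J_Cmul (a := a) r (u.1 * v.1)]
        exact congrArg (J a) (by ring) }
  letI : NormedAddCommGroup V := cV.toNormedAddCommGroup
  letI : InnerProductSpace ℝ V := InnerProductSpace.ofCore cV.toCore
  haveI : FiniteDimensional ℝ V := (Polynomial.degreeLTEquiv ℝ (N+1)).symm.finiteDimensional
  have hrank : Module.finrank ℝ V = N+1 := by
    rw [(Polynomial.degreeLTEquiv ℝ (N+1)).finrank_eq]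
    exact Module.finrank_fin_fun ℝ
  have hmapsTo : ∀ u : V, Apoly a u.1 ∈ V :=
    fun u => hmemV _ (le_trans (Apoly_natDegree_le a u.1) (hdeg u.1 u.2))
  let T : V →ₗ[ℝ] V :=
    { toFun := fun u => ⟨Apoly a u.1, hmapsTo u⟩
      map_add' := fun u v => by
        apply Subtype.ext
        show Apoly a (u.1 + v.1) = Apoly a u.1 + Apoly a v.1
        unfold Apoly
        rw [Polynomial.derivative_add, Polynomial.derivative_add]; ring
      map_smul' := fun r u => by
        apply Subtype.ext
        show Apoly a (r • u.1) = r • Apoly a u.1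
        unfold Apoly
        rw [Polynomial.derivative_smul, Polynomial.derivative_smul,
          Polynomial.smul_eq_C_mul, Polynomial.smul_eq_C_mul, Polynomial.smul_eq_C_mul]
        ring }
  have hinner : ∀ u v : V, (inner ℝ u v : ℝ) = J a (u.1 * v.1) := fun u v => rfl
  have hTapp : ∀ u : V, ((T u : V) : Polynomial ℝ) = Apoly a u.1 := fun u => rfl
  have hsym : T.IsSymmetric := by
    intro u v
    rw [hinner, hinner, hTapp]
    show J a (Apoly a u.1 * v.1) = J a (u.1 * Apoly a v.1)
    rw [J_Apoly ha]
    rw [show (u.1 : Polynomial ℝ) * Apoly a v.1 = Apoly a v.1 * u.1 from mul_comm _ _]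
    rw [J_Apoly ha]
    exact congrArg (J (a+1)) (mul_comm _ _)
  set B := hsym.eigenvectorBasis hrank with hB
  set ev := hsym.eigenvalues hrank with hevdef
  have hevle : ∀ i, ev i ≤ (N:ℝ) * ((N:ℝ) + 2*a + 1) := by
    intro i
    have happ : T (B i) = (ev i : ℝ) • B i := hsym.apply_eigenvectorBasis hrank i
    have h0 : B i ≠ 0 := by
      have h1 := B.toBasis.ne_zero i
      rwa [OrthonormalBasis.coe_toBasis] at h1
    have hBne : ((B i : V) : Polynomial ℝ) ≠ 0 := by
      intro hc
      exact h0 (by ext1; simpa using hc)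
    have hpoly : Apoly a ((B i : V) : Polynomial ℝ) = ev i • ((B i : V) : Polynomial ℝ) :=
      congrArg Subtype.val happ
    have hid := eig_id hBne hpoly
    rw [hid]
    set n := (((B i : V) : Polynomial ℝ)).natDegree
    have hn : n ≤ N := hdeg _ (B i).2
    have hna : (n:ℝ) ≤ (N:ℝ) := by exact_mod_cast hn
    have hnn : (0:ℝ) ≤ (n:ℝ) := Nat.cast_nonneg n
    rcases Nat.eq_zero_or_pos N with hN0 | hN1
    · have hn0 : n = 0 := by omega
      rw [hn0, hN0]
    · have h1 : (1:ℝ) ≤ (N:ℝ) := by exact_mod_cast hN1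
      nlinarith [mul_nonneg (sub_nonneg.2 hna)
        (by linarith : (0:ℝ) ≤ (N:ℝ) + (n:ℝ) - 1 + (2*a+2))]
  have hpV : p ∈ V := hmemV p hp
  set pp : V := ⟨p, hpV⟩ with hpp
  have e1 : (inner ℝ (T pp) pp : ℝ) = ∑ i, ev i * (B.repr pp i * B.repr pp i) := by
    rw [← B.repr.inner_map_map (T pp) pp, PiLp.inner_apply]
    apply Finset.sum_congr rfl
    intro i _
    rw [hsym.eigenvectorBasis_apply_self_apply hrank pp i]
    simp only [conj_trivial, RCLike.inner_apply, RCLike.ofReal_real_eq_id, id_eq, hevdef]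
    ring
  have e2 : (inner ℝ pp pp : ℝ) = ∑ i, B.repr pp i * B.repr pp i := by
    rw [← B.repr.inner_map_map pp pp, PiLp.inner_apply]
    apply Finset.sum_congr rfl
    intro i _
    simp only [conj_trivial, RCLike.inner_apply]
  have hle : (inner ℝ (T pp) pp : ℝ) ≤ (N:ℝ)*((N:ℝ)+2*a+1) * (inner ℝ pp pp : ℝ) := by
    rw [e1, e2, Finset.mul_sum]
    apply Finset.sum_le_sum
    intro i _
    exact mul_le_mul_of_nonneg_right (hevle i) (mul_self_nonneg _)
  have hL : (inner ℝ (T pp) pp : ℝ) = J (a+1) (p.derivative * p.derivative) := by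
    rw [hinner, hTapp]
    exact J_Apoly ha p p
  have hR : (inner ℝ pp pp : ℝ) = J a (p * p) := hinner pp pp
  rw [hL, hR] at hle
  exact hle
-- Part 5: the weight-removal inequality
lemma J_zero (a : ℝ) : J a 0 = 0 := by
  unfold J; simp

set_option maxHeartbeats 2000000 in
lemma removal (μ0 : ℝ) (hμ0 : -1 < μ0) (hμ1 : μ0 < 1) :
    ∀ m : ℕ, ∀ a : ℝ, μ0 ≤ a → ∀ q : Polynomial ℝ, q.natDegree ≤ m →
      J a (q*q) ≤ (2 + 1/(2*(μ0+1)) + 3/(μ0+1))^2 * ((m:ℝ) + a - μ0 + 1)^2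
        * J (a+1) (q*q) := by
  have hμp : (0:ℝ) < μ0 + 1 := by linarith
  set c0 : ℝ := 1 + 1/(2*(μ0+1)) with hc0
  set c2 : ℝ := 1/(μ0+1) with hc2
  have hc0ge : (1:ℝ) ≤ c0 := by
    rw [hc0]; nlinarith [one_div_pos.2 (by linarith : (0:ℝ) < 2*(μ0+1))]
  have hc2pos : (0:ℝ) < c2 := one_div_pos.2 hμp
  have hc2e : c2 * (μ0+1) = 1 := by rw [hc2]; field_simp
  have hc0e : 2*(c0-1)*(μ0+1) = 1 := by rw [hc0]; field_simp; ring
  set c : ℝ := 1 + c0 + 3*c2 with hc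
  have hcc : c = 2 + 1/(2*(μ0+1)) + 3/(μ0+1) := by
    rw [hc, hc0, hc2]; ring
  have hcge : (1:ℝ) ≤ c := by rw [hc]; linarith
  have hkey : c0 + 3*c2*c ≤ c^2 := by
    rw [hc]
    nlinarith [hc0ge, hc2pos, mul_nonneg (by linarith : (0:ℝ) ≤ c0) hc2pos.le,
      sq_nonneg c0, sq_nonneg c2]
  clear_value c0 c2 c
  clear hc0 hc2 hc
  intro m
  induction m using Nat.strong_induction_on with
  | _ m IH =>
  intro a haμ q hq
  rw [← hcc]
  have ha : -1 < a := lt_of_lt_of_le hμ0 haμ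
  have ha1 : (0:ℝ) < a + 1 := by linarith
  have ha2 : -1 < a + 1 := by linarith
  set s : ℝ := (m:ℝ) + a - μ0 + 1 with hs
  have hmnn : (0:ℝ) ≤ (m:ℝ) := Nat.cast_nonneg m
  have hs1 : (1:ℝ) ≤ s := by rw [hs]; linarith
  have hs2 : (1:ℝ) ≤ s^2 := by
    have h := mul_le_mul hs1 hs1 zero_le_one (by linarith)
    have e : s*s = s^2 := by ring
    linarith
  have hsnn : (0:ℝ) ≤ s^2 := sq_nonneg s
  set A := J a (q*q) with hA
  set B := J (a+1) (q*q) with hB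
  set Ex := J a ((Polynomial.X*q)*(Polynomial.X*q)) with hEx
  set Bx := J (a+1) ((Polynomial.X*q)*(Polynomial.X*q)) with hBx
  set Tt := J (a+1) ((Polynomial.X*q)*q.derivative) with hTt
  have hBnn : 0 ≤ B := J_nonneg _
  have hBxnn : 0 ≤ Bx := J_nonneg _
  -- the E-identity
  have h0 := J_ibp (b := a+1) (by linarith) (Polynomial.X*(q*q))
  rw [show a+1-1 = a from by ring] at h0
  have hpoly : (1 - Polynomial.X^2) * (Polynomial.X*(q*q)).derivative
      - Polynomial.C (2*(a+1)) * (Polynomial.X*(Polynomial.X*(q*q)))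
      = ((1-Polynomial.X^2)*(q*q) + ((1-Polynomial.X^2)*((Polynomial.X*q)*q.derivative)
          + (1-Polynomial.X^2)*((Polynomial.X*q)*q.derivative)))
        - Polynomial.C (2*(a+1)) * ((Polynomial.X*q)*(Polynomial.X*q)) := by
    rw [Polynomial.derivative_mul, Polynomial.derivative_mul, Polynomial.derivative_X]
    ring
  rw [hpoly, J_sub ha, J_add ha, J_add ha, J_Cmul, J_shift, J_shift,
    ← hB, ← hTt, ← hEx] at h0
  -- h0 : (B + (Tt + Tt)) - 2*(a+1) * Ex = 0
  -- the splitting identity at level a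
  have hsplitA : A = B + Ex := by
    have h1 : (q*q : Polynomial ℝ)
        = (1-Polynomial.X^2)*(q*q) + (Polynomial.X*q)*(Polynomial.X*q) := by ring
    calc A = J a ((1-Polynomial.X^2)*(q*q) + (Polynomial.X*q)*(Polynomial.X*q)) :=
          congrArg (J a) h1
      _ = B + Ex := by rw [J_add ha, J_shift, ← hB, ← hEx]
  -- the splitting identity at level a+1
  have hsplitB : B = J (a+1+1) (q*q) + Bx := by
    have h1 : (q*q : Polynomial ℝ)
        = (1-Polynomial.X^2)*(q*q) + (Polynomial.X*q)*(Polynomial.X*q) := by ring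
    calc B = J (a+1) ((1-Polynomial.X^2)*(q*q) + (Polynomial.X*q)*(Polynomial.X*q)) :=
          congrArg (J (a+1)) h1
      _ = J (a+1+1) (q*q) + Bx := by rw [J_add ha2, J_shift, ← hBx]
  have hBxB : Bx ≤ B := by
    have := J_nonneg (a := a+1+1) (u := q)
    linarith [hsplitB]
  -- bound on Tt
  have hTb : Tt ≤ 3 * c * s^2 * B := by
    rcases eq_or_ne q.derivative 0 with hq' | hq'
    · have hT0 : Tt = 0 := by
        rw [hTt, hq', mul_zero, J_zero]
      rw [hT0]
      exact mul_nonneg (mul_nonneg (mul_nonneg (by norm_num) (by linarith)) hsnn) hBnn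
    · -- q is nonconstant
      have hqnd : q.natDegree ≠ 0 := by
        intro h
        apply hq'
        rw [Polynomial.eq_C_of_natDegree_eq_zero h]
        simp
      have hm1 : 1 ≤ m := by omega
      -- Cauchy-Schwarz
      have hCS := ip_CS ha2 (Polynomial.X*q) q.derivative
      set D := J (a+1) (q.derivative * q.derivative) with hD
      rw [← hBx, ← hTt] at hCS
      have hDnn : 0 ≤ D := J_nonneg _
      -- induction hypothesis applied to q' at level a+1
      have hq'deg : q.derivative.natDegree ≤ m - 1 := by
        have h1 := Polynomial.natDegree_derivative_le q
        omega
      have hIH := IH (m-1) (by omega) (a+1) (by linarith) q.derivative hq'deg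
      rw [← hcc, ← hD] at hIH
      have hcast : ((m-1 : ℕ) : ℝ) = (m:ℝ) - 1 := by
        rw [Nat.cast_sub hm1, Nat.cast_one]
      rw [hcast] at hIH
      have hIH' : D ≤ c^2 * s^2 * J (a+1+1) (q.derivative * q.derivative) := by
        have hseq : ((m:ℝ) - 1 + (a+1) - μ0 + 1)^2 = s^2 := by rw [hs]; ring
        rw [hseq] at hIH
        exact hIH
      -- spectral bound at level a+1
      have hspec : J (a+1+1) (q.derivative * q.derivative)
          ≤ (m:ℝ)*((m:ℝ)+2*(a+1)+1) * B := by
        have h1 := spec (a := a+1) (by linarith) m q hq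
        rw [← hB] at h1
        exact h1
      -- lambda bound
      have hms : (m:ℝ) ≤ s := by rw [hs]; linarith
      have hams : a - μ0 ≤ s := by rw [hs]; linarith
      clear_value s A B Ex Bx Tt D
      have hlam : (m:ℝ) * ((m:ℝ) + 2*(a+1) + 1) ≤ 9 * s^2 := by
        have h3 : (m:ℝ) + 2*(a+1) + 1 ≤ 8 * s := by linarith
        have h4' : (m:ℝ)*((m:ℝ)+2*(a+1)+1) ≤ s*(8*s) :=
          mul_le_mul hms h3 (by linarith) (by linarith)
        have e : s*(8*s) = 8*s^2 := by ring
        linarith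
      -- assemble the bound on Tt
      have h4 : Tt^2 ≤ B * D := by
        calc Tt^2 ≤ Bx * D := hCS
          _ ≤ B * D := mul_le_mul_of_nonneg_right hBxB hDnn
      have hcs2 : (0:ℝ) ≤ c^2*s^2 := mul_nonneg (sq_nonneg c) (sq_nonneg s)
      have h5a : c^2*s^2*J (a+1+1) (q.derivative*q.derivative)
          ≤ c^2*s^2*((m:ℝ)*((m:ℝ)+2*(a+1)+1)*B) := mul_le_mul_of_nonneg_left hspec hcs2
      have h5b : (m:ℝ)*((m:ℝ)+2*(a+1)+1)*B ≤ 9*s^2*B := mul_le_mul_of_nonneg_right hlam hBnn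
      have h5c : c^2*s^2*((m:ℝ)*((m:ℝ)+2*(a+1)+1)*B) ≤ c^2*s^2*(9*s^2*B) :=
        mul_le_mul_of_nonneg_left h5b hcs2
      have h5 : D ≤ c^2*s^2*(9*s^2*B) := le_trans hIH' (le_trans h5a h5c)
      have h7 : B*D ≤ B*(c^2*s^2*(9*s^2*B)) := mul_le_mul_of_nonneg_left h5 hBnn
      have hT2 : Tt^2 ≤ (3*c*s^2*B)^2 := by
        have h8 : (3*c*s^2*B)^2 = B*(c^2*s^2*(9*s^2*B)) := by ring
        rw [h8]
        exact le_trans h4 h7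
      have hK : (0:ℝ) ≤ 3*c*s^2*B :=
        mul_nonneg (mul_nonneg (mul_nonneg (by norm_num) (by linarith)) hsnn) hBnn
      by_contra hcon
      push_neg at hcon
      have hlt := mul_self_lt_mul_self hK hcon
      have e1 : (3*c*s^2*B)*(3*c*s^2*B) = (3*c*s^2*B)^2 := by ring
      have e2 : Tt*Tt = Tt^2 := by ring
      linarith [hT2, hlt]
  -- final assembly
  clear_value s A B Ex Bx Tt
  have hExval : 2*(a+1) * Ex = B + (Tt + Tt) := by linarith [h0]
  have hAB : 2*(a+1)*A = 2*(a+1)*B + (B + 2*Tt) := by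
    have h1 : 2*(a+1)*A = 2*(a+1)*B + 2*(a+1)*Ex := by rw [hsplitA]; ring
    linarith [h1, hExval]
  clear h0 hpoly hsplitA hsplitB IH hq hBxB hBxnn
  have hstep1 : 2*(a+1)*A ≤ (2*(a+1) + 1 + 6*c*s^2) * B := by linarith [hTb, hAB]
  have h6 : 1 ≤ (a+1)*c2 := by
    linarith [mul_nonneg (by linarith : (0:ℝ) ≤ a - μ0) hc2pos.le, hc2e]
  have h7 : 1 ≤ (a+1)*(2*(c0-1)) := by
    linarith [mul_nonneg (by linarith : (0:ℝ) ≤ a - μ0)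
      (by linarith [hc0ge] : (0:ℝ) ≤ 2*(c0-1)), hc0e]
  have h8 : 2*(a+1) + 1 ≤ 2*(a+1)*c0 := by linarith [h7]
  have h9 : 2*(a+1)+1 ≤ 2*(a+1)*c0*s^2 := by
    linarith [h8, mul_nonneg (by linarith : (0:ℝ) ≤ s^2 - 1)
      (mul_nonneg (by linarith : (0:ℝ) ≤ 2*(a+1)) (by linarith : (0:ℝ) ≤ c0))]
  have h10 : 6*c*s^2 ≤ 6*(a+1)*c2*c*s^2 := by
    linarith [mul_nonneg (mul_nonneg (by linarith : (0:ℝ) ≤ 6*c) hsnn)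
      (by linarith [h6] : (0:ℝ) ≤ (a+1)*c2 - 1)]
  have h11 : 2*(a+1)*(c0 + 3*c2*c)*s^2 ≤ 2*(a+1)*(c^2*s^2) := by
    linarith [mul_nonneg (by linarith [hkey] : (0:ℝ) ≤ c^2 - (c0 + 3*c2*c))
      (mul_nonneg (by linarith : (0:ℝ) ≤ 2*(a+1)) hsnn)]
  have h12 : 2*(a+1)*c0*s^2 + 6*(a+1)*c2*c*s^2 = 2*(a+1)*(c0 + 3*c2*c)*s^2 := by ring
  have hscal : 2*(a+1) + 1 + 6*c*s^2 ≤ 2*(a+1)*(c^2*s^2) := by linarith [h9, h10, h11, h12]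
  have hmul : (2*(a+1) + 1 + 6*c*s^2)*B ≤ (2*(a+1)*(c^2*s^2))*B :=
    mul_le_mul_of_nonneg_right hscal hBnn
  have h13 : 2*(a+1)*A ≤ 2*(a+1)*(c^2*s^2*B) := by
    calc 2*(a+1)*A ≤ (2*(a+1) + 1 + 6*c*s^2) * B := hstep1
      _ ≤ (2*(a+1)*(c^2*s^2))*B := hmul
      _ = 2*(a+1)*(c^2*s^2*B) := by ring
  have h14 := le_of_mul_le_mul_left h13 (by linarith : (0:ℝ) < 2*(a+1))
  calc A ≤ c^2*s^2*B := h14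
    _ = c^2*s^2*B := rfl
-- Part 6: Bernstein inequality and iteration
lemma bernsteinW {μ : ℝ} (hμ : -1 < μ) (hμ' : μ < 1) (N : ℕ) (hN : 1 ≤ N)
    (p : Polynomial ℝ) (hp : p.natDegree ≤ N) :
    J μ (p.derivative * p.derivative)
      ≤ 16*(2 + 1/(2*(μ+1)) + 3/(μ+1))^2 * ((N:ℝ))^4 * J μ (p * p) := by
  set cR : ℝ := 2 + 1/(2*(μ+1)) + 3/(μ+1) with hcR
  have hp' : p.derivative.natDegree ≤ N := by
    have := Polynomial.natDegree_derivative_le p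
    omega
  have hrem := removal μ hμ hμ' N μ le_rfl p.derivative hp'
  rw [show ((N:ℝ) + μ - μ + 1) = (N:ℝ) + 1 from by ring, ← hcR] at hrem
  have hspec := spec hμ N p hp
  have hcRsq : (0:ℝ) ≤ cR^2 := sq_nonneg cR
  have hN1 : (1:ℝ) ≤ (N:ℝ) := by exact_mod_cast hN
  have hNnn : (0:ℝ) ≤ (N:ℝ) := by linarith
  have h1 : ((N:ℝ)+1)^2 ≤ 4*(N:ℝ)^2 := by nlinarith
  have h2 : (N:ℝ)*((N:ℝ) + 2*μ + 1) ≤ 4*(N:ℝ)^2 := by nlinarith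
  have hJnn : (0:ℝ) ≤ J μ (p*p) := J_nonneg _
  have hspec' : cR^2*((N:ℝ)+1)^2 * J (μ+1) (p.derivative*p.derivative)
      ≤ cR^2*((N:ℝ)+1)^2 * ((N:ℝ)*((N:ℝ)+2*μ+1) * J μ (p*p)) :=
    mul_le_mul_of_nonneg_left hspec (by positivity)
  have h3 : cR^2*((N:ℝ)+1)^2 * ((N:ℝ)*((N:ℝ)+2*μ+1) * J μ (p*p))
      ≤ cR^2*(4*(N:ℝ)^2) * ((4*(N:ℝ)^2) * J μ (p*p)) := by
    have hA : ((N:ℝ)+1)^2 * ((N:ℝ)*((N:ℝ)+2*μ+1)) ≤ (4*(N:ℝ)^2) * (4*(N:ℝ)^2) := by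
      apply mul_le_mul h1 h2 (by nlinarith) (by positivity)
    have hB := mul_le_mul_of_nonneg_right hA (mul_nonneg hcRsq hJnn)
    nlinarith [hB]
  have h4 : cR^2*(4*(N:ℝ)^2) * ((4*(N:ℝ)^2) * J μ (p*p))
      = 16*cR^2 * (N:ℝ)^4 * J μ (p*p) := by ring
  calc J μ (p.derivative * p.derivative)
      ≤ cR^2*((N:ℝ)+1)^2 * J (μ+1) (p.derivative*p.derivative) := hrem
    _ ≤ cR^2*((N:ℝ)+1)^2 * ((N:ℝ)*((N:ℝ)+2*μ+1) * J μ (p*p)) := hspec'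
    _ ≤ cR^2*(4*(N:ℝ)^2) * ((4*(N:ℝ)^2) * J μ (p*p)) := h3
    _ = 16*cR^2 * (N:ℝ)^4 * J μ (p*p) := h4

lemma iter_eval (p : Polynomial ℝ) :
    ∀ j, iteratedDeriv j (fun x => p.eval x)
      = fun x => (Polynomial.derivative^[j] p).eval x := by
  intro j
  induction j with
  | zero => simp
  | succ n ih =>
    rw [iteratedDeriv_succ, ih]
    funext x
    rw [Function.iterate_succ_apply']
    exact Polynomial.deriv _
-- Part 7: relation to wSobNorm and the final theorem
lemma wSob_eq (μ : ℝ) (k : ℕ) (p : Polynomial ℝ) :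
    wSobNorm μ k (fun x => p.eval x)
      = Real.sqrt (∑ j ∈ Finset.range (k+1),
          J μ ((Polynomial.derivative^[j] p) * (Polynomial.derivative^[j] p))) := by
  unfold wSobNorm
  congr 1
  apply Finset.sum_congr rfl
  intro j _
  rw [iter_eval]
  unfold J
  apply intervalIntegral.integral_congr
  intro x _
  simp only [Polynomial.eval_mul, wt]
  ring

theorem stmt4' (μ : ℝ) (hμ : -1 < μ) (hμ' : μ < 1) (r s : ℕ) (hrs : r ≤ s) :
    ∃ C : ℝ, 0 < C ∧ ∀ N : ℕ, 2 ≤ N → ∀ p : Polynomial ℝ, p.natDegree ≤ N →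
      wSobNorm μ s (fun x => p.eval x)
        ≤ C * (N : ℝ) ^ (2 * (s - r)) * wSobNorm μ r (fun x => p.eval x) := by
  have hμ1 : (0:ℝ) < μ + 1 := by linarith
  set cR : ℝ := 2 + 1/(2*(μ+1)) + 3/(μ+1) with hcR
  set d := s - r with hd
  set CC : ℝ := 1 + (d:ℝ) * (16*cR^2)^d with hCC
  have hcR2 : (2:ℝ) ≤ cR := by
    rw [hcR]
    have h1 : (0:ℝ) < 1/(2*(μ+1)) := one_div_pos.2 (by linarith)
    have h2 : (0:ℝ) < 3/(μ+1) := div_pos (by norm_num) hμ1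
    linarith
  have hK16 : (1:ℝ) ≤ 16*cR^2 := by nlinarith
  have hK16nn : (0:ℝ) ≤ 16*cR^2 := by linarith
  have hCC1 : (1:ℝ) ≤ CC := by
    rw [hCC]
    have h1 : (0:ℝ) ≤ (d:ℝ) * (16*cR^2)^d :=
      mul_nonneg (Nat.cast_nonneg d) (pow_nonneg hK16nn d)
    linarith
  refine ⟨Real.sqrt CC, Real.sqrt_pos.2 (by linarith), ?_⟩
  intro N hN p hp
  set K4 : ℝ := 16*cR^2 * (N:ℝ)^4 with hK4
  have hN1 : (1:ℝ) ≤ (N:ℝ) := by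
    have : (2:ℝ) ≤ (N:ℝ) := by exact_mod_cast hN
    linarith
  have hN4 : (1:ℝ) ≤ (N:ℝ)^4 := one_le_pow₀ hN1
  have hK41 : (1:ℝ) ≤ K4 := by
    rw [hK4]
    nlinarith [hN4, hcR2]
  have hK4nn : (0:ℝ) ≤ K4 := by linarith
  have hdeg : ∀ j, (Polynomial.derivative^[j] p).natDegree ≤ N := by
    intro j
    induction j with
    | zero => simpa using hp
    | succ n ih =>
      rw [Function.iterate_succ_apply']
      have := Polynomial.natDegree_derivative_le (Polynomial.derivative^[n] p)
      omega
  set f : ℕ → ℝ := fun j =>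
    J μ ((Polynomial.derivative^[j] p) * (Polynomial.derivative^[j] p)) with hf
  have hfnn : ∀ j, 0 ≤ f j := fun j => J_nonneg _
  have hstep : ∀ k : ℕ, f (r+k) ≤ K4^k * f r := by
    intro k
    induction k with
    | zero => simpa using le_refl (f r)
    | succ n ih =>
      have hb := bernsteinW hμ hμ' N (by omega) (Polynomial.derivative^[r+n] p) (hdeg _)
      rw [← hcR, ← hK4] at hb
      have hq' : Polynomial.derivative^[r+(n+1)] p
          = Polynomial.derivative (Polynomial.derivative^[r+n] p) := by
        rw [show r+(n+1) = (r+n)+1 from rfl, Function.iterate_succ_apply']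
      have hfe : f (r+(n+1)) ≤ K4 * f (r+n) := by
        rw [hf]
        simp only [hq']
        exact hb
      calc f (r+(n+1)) ≤ K4 * f (r+n) := hfe
        _ ≤ K4 * (K4^n * f r) := mul_le_mul_of_nonneg_left ih hK4nn
        _ = K4^(n+1) * f r := by ring
  set Sr := ∑ j ∈ Finset.range (r+1), f j with hSr
  set Ss := ∑ j ∈ Finset.range (s+1), f j with hSs
  have hSrnn : 0 ≤ Sr := Finset.sum_nonneg (fun j _ => hfnn j)
  have hJrS : f r ≤ Sr := Finset.single_le_sum (fun j _ => hfnn j) (Finset.self_mem_range_succ r)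
  have hsplit : Ss = Sr + ∑ j ∈ Finset.Ico (r+1) (s+1), f j := by
    rw [hSs, hSr, Finset.range_eq_Ico, Finset.range_eq_Ico]
    exact (Finset.sum_Ico_consecutive f (Nat.zero_le (r+1)) (by omega : r+1 ≤ s+1)).symm
  have hbound : ∀ j ∈ Finset.Ico (r+1) (s+1), f j ≤ K4^d * f r := by
    intro j hj
    rw [Finset.mem_Ico] at hj
    obtain ⟨k, rfl⟩ : ∃ k, j = r + k := ⟨j - r, by omega⟩
    have h2 : K4^k ≤ K4^d := pow_le_pow_right₀ hK41 (by omega)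
    calc f (r+k) ≤ K4^k * f r := hstep k
      _ ≤ K4^d * f r := mul_le_mul_of_nonneg_right h2 (hfnn r)
  have hIco : ∑ j ∈ Finset.Ico (r+1) (s+1), f j ≤ (d:ℝ) * (K4^d * f r) := by
    have h1 := Finset.sum_le_card_nsmul (Finset.Ico (r+1) (s+1)) f (K4^d * f r) hbound
    rw [Nat.card_Ico, nsmul_eq_mul] at h1
    have hce : s + 1 - (r+1) = d := by omega
    rw [hce] at h1
    exact h1
  have hSsb : Ss ≤ (1 + (d:ℝ)*K4^d) * Sr := by
    have h3 : (d:ℝ)*(K4^d * f r) ≤ (d:ℝ)*K4^d*Sr := by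
      have h4 := mul_le_mul_of_nonneg_left hJrS
        (mul_nonneg (Nat.cast_nonneg d) (pow_nonneg hK4nn d))
      calc (d:ℝ)*(K4^d * f r) = ((d:ℝ)*K4^d) * f r := by ring
        _ ≤ ((d:ℝ)*K4^d) * Sr := h4
        _ = (d:ℝ)*K4^d*Sr := by ring
    have h5 : (1 + (d:ℝ)*K4^d) * Sr = Sr + (d:ℝ)*K4^d*Sr := by ring
    linarith [hsplit, hIco, h3]
  have hpow : K4^d = (16*cR^2)^d * ((N:ℝ)^(4*d)) := by
    rw [hK4, mul_pow, ← pow_mul]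
  have hN4d : (1:ℝ) ≤ (N:ℝ)^(4*d) := one_le_pow₀ hN1
  have hN4dnn : (0:ℝ) ≤ (N:ℝ)^(4*d) := by linarith
  have hfinal : Ss ≤ CC * ((N:ℝ)^(4*d)) * Sr := by
    have e : (1 + (d:ℝ)*K4^d) = 1 + (d:ℝ)*(16*cR^2)^d*((N:ℝ)^(4*d)) := by
      rw [hpow]; ring
    have h6 : (0:ℝ) ≤ (d:ℝ)*(16*cR^2)^d :=
      mul_nonneg (Nat.cast_nonneg d) (pow_nonneg hK16nn d)
    have h5 : 1 + (d:ℝ)*(16*cR^2)^d*((N:ℝ)^(4*d)) ≤ CC*((N:ℝ)^(4*d)) := by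
      rw [hCC]
      have h7 : (1 + (d:ℝ)*(16*cR^2)^d)*((N:ℝ)^(4*d))
          = (N:ℝ)^(4*d) + (d:ℝ)*(16*cR^2)^d*((N:ℝ)^(4*d)) := by ring
      linarith [hN4d, h7]
    calc Ss ≤ (1 + (d:ℝ)*K4^d) * Sr := hSsb
      _ = (1 + (d:ℝ)*(16*cR^2)^d*((N:ℝ)^(4*d))) * Sr := by rw [e]
      _ ≤ (CC*((N:ℝ)^(4*d))) * Sr := mul_le_mul_of_nonneg_right h5 hSrnn
      _ = CC * ((N:ℝ)^(4*d)) * Sr := by ring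
  -- take square roots
  rw [wSob_eq μ s p, wSob_eq μ r p, ← hf, ← hSs, ← hSr]
  have hs1 : Real.sqrt Ss ≤ Real.sqrt (CC * ((N:ℝ)^(4*d)) * Sr) := Real.sqrt_le_sqrt hfinal
  have hCCnn : (0:ℝ) ≤ CC := by linarith
  have hsq : Real.sqrt (CC * ((N:ℝ)^(4*d)) * Sr)
      = Real.sqrt CC * (N:ℝ)^(2*d) * Real.sqrt Sr := by
    rw [Real.sqrt_mul (mul_nonneg hCCnn hN4dnn) Sr, Real.sqrt_mul hCCnn]
    have hee : (N:ℝ)^(4*d) = ((N:ℝ)^(2*d))^2 := by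
      rw [← pow_mul]
      congr 1
      omega
    rw [hee, Real.sqrt_sq (pow_nonneg (by linarith) _)]
  rw [hsq] at hs1
  exact hs1

/-- inverse inequality: for `0 ≤ r ≤ s` there is `C` independent of `N`
with `‖ψ‖_{s,w} ≤ C N^{2(s−r)} ‖ψ‖_{r,w}` for every polynomial `ψ` of degree `≤ N`. -/
theorem stmt4 (μ : ℝ) (hμ : -1 < μ) (hμ' : μ < 1) (r s : ℕ) (hrs : r ≤ s) :
    ∃ C : ℝ, 0 < C ∧ ∀ N : ℕ, 2 ≤ N → ∀ p : Polynomial ℝ, p.natDegree ≤ N →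
      wSobNorm μ s (fun x => p.eval x)
        ≤ C * (N : ℝ) ^ (2 * (s - r)) * wSobNorm μ r (fun x => p.eval x) := by
  exact stmt4' μ hμ hμ' r s hrs
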